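/- Let G be a group, let M be a normal abelian subgroup of G such that every element of M commutes with every element of the commutator subgroup [G, G], and let δ : G → M be a derivation with respect to the conjugation action. Then for all g, h ∈ G, δ([g, h]) = [δ(g), h]·[g, δ(h)], where [a, b] = a⁻¹b⁻¹ab. -/

import Mathlib

/-- If `M` is a normal abelian subgroup of `G` whose elements commute with every element of
the commutator subgroup `[G, G]`, and `δ : G → M` is a derivation for the conjugation
action, then `δ([g, h]) = [δ g, h] * [g, δ h]`, where `[a, b] = a⁻¹ * b⁻¹ * a * b`. -/
theorem derivation_commutator_formula
    {G : Type*} [Group G] (M : Subgroup G) (hM : M.Normal)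
    (hab : ∀ a b : G, a ∈ M → b ∈ M → a * b = b * a)
    (hcomm : ∀ m : G, m ∈ M → ∀ c : G, c ∈ commutator G → m * c = c * m)
    (δ : G → M)
    (hδ : ∀ g h : G, (δ (g * h) : G) = h⁻¹ * (δ g : G) * h * (δ h : G)) :
    ∀ g h : G,
      (δ (g⁻¹ * h⁻¹ * g * h) : G) =
        ((δ g : G)⁻¹ * h⁻¹ * (δ g : G) * h) * (g⁻¹ * (δ h : G)⁻¹ * g * (δ h : G)) := by
  -- δ 1 = 1
  have h1 : (δ 1 : G) = 1 := by
    have e := hδ 1 1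
    simp only [one_mul, mul_one, inv_one] at e
    exact (left_eq_mul.mp e)
  -- δ x⁻¹ = x * (δ x)⁻¹ * x⁻¹
  have hinv : ∀ x : G, (δ x⁻¹ : G) = x * (δ x : G)⁻¹ * x⁻¹ := by
    intro x
    have e := hδ x x⁻¹
    rw [mul_inv_cancel, h1] at e
    have e2 : (x⁻¹)⁻¹ * (δ x : G) * x⁻¹ * (δ x⁻¹ : G) = 1 := e.symm
    calc (δ x⁻¹ : G)
        = (x * (δ x : G) * x⁻¹)⁻¹ * ((x⁻¹)⁻¹ * (δ x : G) * x⁻¹ * (δ x⁻¹ : G)) := by group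
      _ = x * (δ x : G)⁻¹ * x⁻¹ := by rw [e2]; group
  intro g h
  set A : G := (δ g : G) with hAdef
  set B : G := (δ h : G) with hBdef
  have hA : A ∈ M := (δ g).2
  have hB : B ∈ M := (δ h).2
  -- commutation facts
  have mem1 : h⁻¹ * g⁻¹ * h * g ∈ commutator G := by
    open scoped commutatorElement in
    have : ⁅h⁻¹, g⁻¹⁆ ∈ commutator G :=
      Subgroup.commutator_mem_commutator (Subgroup.mem_top _) (Subgroup.mem_top _)
    simpa [commutatorElement_def] using this
  have mem2 : h⁻¹ * g * h * g⁻¹ ∈ commutator G := by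
    open scoped commutatorElement in
    have : ⁅h⁻¹, g⁆ ∈ commutator G :=
      Subgroup.commutator_mem_commutator (Subgroup.mem_top _) (Subgroup.mem_top _)
    simpa [commutatorElement_def] using this
  have c1 : A⁻¹ * (h⁻¹ * g⁻¹ * h * g) = (h⁻¹ * g⁻¹ * h * g) * A⁻¹ :=
    hcomm A⁻¹ (inv_mem hA) _ mem1
  have c2 : B⁻¹ * (h⁻¹ * g * h * g⁻¹) = (h⁻¹ * g * h * g⁻¹) * B⁻¹ :=
    hcomm B⁻¹ (inv_mem hB) _ mem2
  have memC : g⁻¹ * (h * B⁻¹ * h⁻¹) * g ∈ M := by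
    have h1' : h * B⁻¹ * h⁻¹ ∈ M := hM.conj_mem _ (inv_mem hB) h
    have h2' := hM.conj_mem _ h1' g⁻¹
    simpa using h2'
  have c3 : A * (g⁻¹ * (h * B⁻¹ * h⁻¹) * g) = (g⁻¹ * (h * B⁻¹ * h⁻¹) * g) * A :=
    hab A _ hA memC
  have expand : (δ (g⁻¹ * h⁻¹ * g * h) : G) =
      ((h⁻¹ * g⁻¹ * h * g) * A⁻¹) * (g⁻¹ * B⁻¹ * h⁻¹ * g * A * h * B) := by
    rw [hδ (g⁻¹ * h⁻¹ * g) h, hδ (g⁻¹ * h⁻¹) g, hδ g⁻¹ h⁻¹, hinv g, hinv h,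
      ← hAdef, ← hBdef]
    group
  rw [expand]
  calc ((h⁻¹ * g⁻¹ * h * g) * A⁻¹) * (g⁻¹ * B⁻¹ * h⁻¹ * g * A * h * B)
      = (A⁻¹ * (h⁻¹ * g⁻¹ * h * g)) * (g⁻¹ * B⁻¹ * h⁻¹ * g * A * h * B) := by rw [← c1]
    _ = (A⁻¹ * h⁻¹) * ((g⁻¹ * (h * B⁻¹ * h⁻¹) * g) * A) * (h * B) := by group
    _ = (A⁻¹ * h⁻¹) * (A * (g⁻¹ * (h * B⁻¹ * h⁻¹) * g)) * (h * B) := by rw [← c3]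
    _ = (A⁻¹ * h⁻¹ * A) * (g⁻¹ * h) * ((B⁻¹ * (h⁻¹ * g * h * g⁻¹)) * (g * B)) := by group
    _ = (A⁻¹ * h⁻¹ * A) * (g⁻¹ * h) * (((h⁻¹ * g * h * g⁻¹) * B⁻¹) * (g * B)) := by rw [c2]
    _ = (A⁻¹ * h⁻¹ * A * h) * (g⁻¹ * B⁻¹ * g * B) := by group
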